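/- Let w be a bi-infinite word over a finite alphabet A and let S be a finite set of finite words over A that defines w. Then the number of minimal forbidden words of w is at most the cardinality of S. -/
import Mathlib


/-- `u` is a (finite) factor of the bi-infinite word `w`. -/
def IsFactor {A : Type} (w : ℤ → A) (u : List A) : Prop :=
  ∃ i : ℤ, u = (List.range u.length).map fun j => w (i + j)

/-- `w'` is a shift of `w`. -/
def IsShift {A : Type} (w' w : ℤ → A) : Prop :=
  ∃ t : ℤ, ∀ i : ℤ, w' i = w (i + t)

/-- A set `S` of finite words defines the bi-infinite word `w`. -/
def Defines {A : Type} (S : Set (List A)) (w : ℤ → A) : Prop :=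
  (∀ u ∈ S, ¬ IsFactor w u) ∧
  ∀ w' : ℤ → A, (∀ u ∈ S, ¬ IsFactor w' u) → IsShift w' w

/-- `w` has period `n`. -/
def HasPeriod {A : Type} (w : ℤ → A) (n : ℕ) : Prop :=
  ∀ i : ℤ, w (i + n) = w i

/-- `n` is the least period of `w`. -/
def IsLeastPeriod {A : Type} (w : ℤ → A) (n : ℕ) : Prop :=
  1 ≤ n ∧ HasPeriod w n ∧ ∀ m : ℕ, 1 ≤ m → HasPeriod w m → n ≤ m

/-- `u` is a minimal forbidden word of `w`: it is not a factor of `w`, but every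
proper factor of `u` is a factor of `w`. -/
def MinForbidden {A : Type} (w : ℤ → A) (u : List A) : Prop :=
  ¬ IsFactor w u ∧ ∀ v : List A, v <:+: u → v ≠ u → IsFactor w v

lemma isFactor_iff {A : Type} (w : ℤ → A) (u : List A) :
    IsFactor w u ↔ ∃ i : ℤ, ∀ (k : ℕ) (hk : k < u.length), u[k] = w (i + k) := by
  have hdef : IsFactor w u ↔ ∃ i : ℤ,
      u = (List.range u.length).map (fun k : ℕ => w (i + (k : ℤ))) := by
    have key : ∀ (n : ℕ) (i : ℤ),
        List.map (fun j => w (i + j)) (do let a ← List.range n; pure ((a : ℤ))) =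
          (List.range n).map (fun k : ℕ => w (i + (k : ℤ))) := fun n i => by
      induction n with
      | zero => rfl
      | succ m ih => rw [List.range_succ]; simp_all
    unfold IsFactor
    constructor
    · rintro ⟨i, hi⟩; exact ⟨i, hi.trans (key u.length i)⟩
    · rintro ⟨i, hi⟩; exact ⟨i, hi.trans (key u.length i).symm⟩
  rw [hdef]
  constructor
  · rintro ⟨i, hi⟩
    refine ⟨i, fun k hk => ?_⟩
    have := List.getElem_of_eq hi hk
    rw [this, List.getElem_map, List.getElem_range]
  · rintro ⟨i, hi⟩
    refine ⟨i, ?_⟩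
    apply List.ext_getElem (by simp only [List.length_map, List.length_range])
    intro k h1 h2
    rw [List.getElem_map, List.getElem_range]
    exact hi k h1

lemma infix_isFactor {A : Type} {w : ℤ → A} {u v : List A} (h : u <:+: v)
    (hv : IsFactor w v) : IsFactor w u := by
  obtain ⟨s, t, rfl⟩ := h
  rw [isFactor_iff] at hv ⊢
  obtain ⟨i, hi⟩ := hv
  refine ⟨i + s.length, fun k hk => ?_⟩
  have hlt : s.length + k < (s ++ u ++ t).length := by simp; omega
  have h2 := hi (s.length + k) hlt
  have h3 : (s ++ u ++ t)[s.length + k]'hlt = u[k]'hk := by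
    simp only [List.getElem_append]
    rw [dif_pos (by simp; omega), dif_neg (by omega)]
    simp
  rw [h3] at h2
  rw [h2]
  push_cast
  ring_nf

lemma exists_marker {A : Type} {w : ℤ → A} {S : Finset (List A)}
    (hdef : Defines (↑S) w) {u : List A} (hu : MinForbidden w u) :
    ∃ s ∈ S, u <:+: s ∧ ∀ v, v <:+: s → ¬ IsFactor w v → u <:+: v := by
  have hne : u ≠ [] := by
    rintro rfl
    exact hu.1 ⟨0, rfl⟩
  have hn : 0 < u.length := List.length_pos_iff.2 hne
  -- occurrence of the prefix (dropLast)
  have hpre : IsFactor w u.dropLast :=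
    hu.2 _ (List.dropLast_prefix u).isInfix
      (fun h => by have := congrArg List.length h; simp [List.length_dropLast] at this; omega)
  have hsuf : IsFactor w u.tail :=
    hu.2 _ (List.tail_suffix u).isInfix
      (fun h => by have := congrArg List.length h; simp [List.length_tail] at this; omega)
  obtain ⟨i, hi⟩ := (isFactor_iff w _).1 hpre
  obtain ⟨j, hj⟩ := (isFactor_iff w _).1 hsuf
  simp only [List.length_dropLast] at hi
  simp only [List.length_tail] at hj
  -- the glued bi-infinite word
  set g : ℤ → A := fun x =>
    if hx : 0 ≤ x ∧ x < (u.length : ℤ) then u[x.toNat]'(by omega)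
    else if x < 0 then w (i + x) else w (j + x - 1) with hg
  have hM : ∀ (k : ℕ) (hk : k < u.length), g k = u[k]'hk := by
    intro k hk
    have hx : (0:ℤ) ≤ (k:ℤ) ∧ (k:ℤ) < (u.length:ℤ) := ⟨by positivity, by exact_mod_cast hk⟩
    simp only [hg, dif_pos hx, Int.toNat_natCast]
  have hL : ∀ x : ℤ, x ≤ (u.length : ℤ) - 2 → g x = w (i + x) := by
    intro x hx
    by_cases h0 : 0 ≤ x ∧ x < (u.length : ℤ)
    · simp only [hg, dif_pos h0]
      have hk : x.toNat < u.dropLast.length := by simp [List.length_dropLast]; omega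
      have h2 := hi x.toNat (by simpa [List.length_dropLast] using hk)
      rw [List.getElem_dropLast] at h2
      rw [h2]
      congr 1
      omega
    · have hneg : x < 0 := by
        rcases lt_or_ge x 0 with h | h
        · exact h
        · exact absurd ⟨h, by omega⟩ h0
      simp only [hg, dif_neg h0, if_pos hneg]
  have hR : ∀ x : ℤ, 1 ≤ x → g x = w (j + x - 1) := by
    intro x hx
    by_cases h0 : 0 ≤ x ∧ x < (u.length : ℤ)
    · simp only [hg, dif_pos h0]
      have hk : x.toNat - 1 < u.length - 1 := by omega
      have h2 := hj (x.toNat - 1) hk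
      rw [List.getElem_tail] at h2
      have hidx : x.toNat - 1 + 1 = x.toNat := by omega
      simp only [hidx] at h2
      rw [h2]
      congr 1
      omega
    · have hge : ¬ x < 0 := by omega
      have : (u.length : ℤ) ≤ x := by
        by_contra h
        exact h0 ⟨by omega, by omega⟩
      simp only [hg, dif_neg h0, if_neg hge]
  -- u is a factor of g
  have hug : IsFactor g u := by
    rw [isFactor_iff]
    refine ⟨0, fun k hk => ?_⟩
    rw [zero_add, ← hM k hk]
  -- g is not a shift of w
  have hns : ¬ IsShift g w := by
    rintro ⟨t, ht⟩
    apply hu.1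
    rw [isFactor_iff]
    refine ⟨t, fun k hk => ?_⟩
    rw [← hM k hk, ht k, add_comm]
  -- some s ∈ S is a factor of g
  have hex : ∃ s ∈ S, IsFactor g s := by
    by_contra h
    push_neg at h
    exact hns (hdef.2 g (fun s hs => h s (by exact_mod_cast hs)))
  -- trichotomy for factors of g
  have htri : ∀ v : List A, IsFactor g v → IsFactor w v ∨ u <:+: v := by
    intro v hv
    rw [isFactor_iff] at hv
    obtain ⟨a, ha⟩ := hv
    by_cases hcase1 : a + v.length ≤ (u.length : ℤ) - 1
    · left
      rw [isFactor_iff]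
      refine ⟨i + a, fun k hk => ?_⟩
      have hk' : (k : ℤ) < (v.length : ℤ) := by exact_mod_cast hk
      rw [ha k hk, hL (a + k) (by omega)]
      congr 1
      ring
    · by_cases hcase2 : 1 ≤ a
      · left
        rw [isFactor_iff]
        refine ⟨j + a - 1, fun k hk => ?_⟩
        rw [ha k hk, hR (a + k) (by omega)]
        congr 1
        ring
      · right
        push_neg at hcase1 hcase2
        set m := (-a).toNat with hm
        have hmz : (m : ℤ) = -a := Int.toNat_of_nonneg (by omega)
        have hlen : m + u.length ≤ v.length := by omega
        have hu_eq : u = (v.drop m).take u.length := by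
          apply List.ext_getElem (by simp [List.length_take, List.length_drop]; omega)
          intro k h1 h2
          rw [List.getElem_take, List.getElem_drop]
          have h3 : m + k < v.length := by omega
          rw [ha (m + k) h3]
          have he : a + ((m + k : ℕ) : ℤ) = (k : ℤ) := by push_cast; omega
          rw [he, hM k h1]
        rw [hu_eq]
        exact ((List.take_prefix _ _).isInfix).trans (List.drop_suffix _ _).isInfix
  obtain ⟨s, hsS, hsg⟩ := hex
  refine ⟨s, hsS, ?_, ?_⟩
  · rcases htri s hsg with h | h
    · exact absurd h (hdef.1 s (by exact_mod_cast hsS))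
    · exact h
  · intro v hvs hvw
    rcases htri v (infix_isFactor hvs hsg) with h | h
    · exact absurd h hvw
    · exact h

theorem card_minimal_forbidden_le {A : Type} [Fintype A]
    (w : ℤ → A) (S : Finset (List A)) (hdef : Defines (↑S) w) :
    ({u : List A | MinForbidden w u}).Finite ∧
    ({u : List A | MinForbidden w u}).ncard ≤ S.card := by
  classical
  set M := {u : List A | MinForbidden w u} with hM
  set f : List A → List A := fun u =>
    if h : MinForbidden w u then (exists_marker hdef h).choose else [] with hf
  have hprop : ∀ u ∈ M, f u ∈ S ∧ u <:+: f u ∧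
      ∀ v, v <:+: f u → ¬ IsFactor w v → u <:+: v := by
    intro u hu
    simp only [hM, Set.mem_setOf_eq] at hu
    simp only [hf, dif_pos hu]
    obtain ⟨h1, h2⟩ := (exists_marker hdef hu).choose_spec
    exact ⟨h1, h2⟩
  have himg : f '' M ⊆ ↑S := by
    rintro _ ⟨u, hu, rfl⟩
    exact (hprop u hu).1
  have hinj : Set.InjOn f M := by
    intro u hu u' hu' heq
    obtain ⟨-, h2, h3⟩ := hprop u hu
    obtain ⟨-, h2', h3'⟩ := hprop u' hu'
    have hnf : ¬ IsFactor w u := hu.1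
    have hnf' : ¬ IsFactor w u' := hu'.1
    have e1 : u' <:+: u := h3' u (heq ▸ h2) hnf
    have e2 : u <:+: u' := h3 u' (heq ▸ h2') hnf'
    exact List.IsInfix.eq_of_length e2 (le_antisymm e2.length_le e1.length_le)
  have hfin : M.Finite :=
    Set.Finite.of_finite_image (Set.Finite.subset S.finite_toSet himg) hinj
  refine ⟨hfin, ?_⟩
  calc M.ncard = (f '' M).ncard := (Set.ncard_image_of_injOn hinj).symm
    _ ≤ (↑S : Set (List A)).ncard := Set.ncard_le_ncard himg S.finite_toSet
    _ = S.card := Set.ncard_coe_finset S
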